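/- Let U and V be nonempty finite words over an alphabet. If (UV)⁻ = (VU)⁻, where W⁻ denotes the word W deprived of its last letter, then there exist a finite word W and integers i, j ≥ 1 such that U = Wⁱ and V = Wʲ; in particular UV = VU and UV = W^{i+j}. -/

import Mathlib

private theorem flatten_rep_add {A : Type*} (W : List A) (i j : ℕ) :
    (List.replicate i W).flatten ++ (List.replicate j W).flatten
      = (List.replicate (i + j) W).flatten := by
  rw [← List.flatten_append, ← List.replicate_add]

private theorem aux_pow {A : Type*} : ∀ n (U V : List A), U.length + V.length ≤ n →
    U ≠ [] → V ≠ [] → U ++ V.dropLast = V ++ U.dropLast →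
    ∃ (W : List A) (i j : ℕ), 1 ≤ i ∧ 1 ≤ j ∧
      U = (List.replicate i W).flatten ∧ V = (List.replicate j W).flatten := by
  intro n
  induction n with
  | zero => intro U V hn hU _ _; simp at hn
            exact absurd hn.1 hU
  | succ n ih =>
    intro U V hn hU hV h
    rcases lt_trichotomy U.length V.length with hlt | heq | hgt
    · -- U is a prefix of V
      have hpre : U <+: V := by
        have p1 : U <+: V ++ U.dropLast := by rw [← h]; exact List.prefix_append U _
        exact List.prefix_of_prefix_length_le p1 (List.prefix_append V _) hlt.le
      obtain ⟨V', rfl⟩ := hpre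
      have hV' : V' ≠ [] := by
        rintro rfl; simp at hlt
      have hstep : U ++ V'.dropLast = V' ++ U.dropLast := by
        have := h
        rw [List.dropLast_append_of_ne_nil hV', List.append_assoc] at this
        exact (List.append_cancel_left this)
      have hlen : U.length + V'.length ≤ n := by
        have h1 : 0 < U.length := List.length_pos_iff.mpr hU
        simp only [List.length_append] at hn
        omega
      obtain ⟨W, i, j, hi, hj, hUe, hVe⟩ := ih U V' hlen hU hV' hstep
      exact ⟨W, i, i + j, hi, by omega, hUe, by rw [hUe, hVe, flatten_rep_add]⟩
    · -- equal lengths → U = V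
      have : U = V := (List.append_inj h heq).1
      subst this
      exact ⟨U, 1, 1, le_refl 1, le_refl 1, by simp, by simp⟩
    · -- symmetric case
      have hpre : V <+: U := by
        have p1 : V <+: U ++ V.dropLast := by rw [h]; exact List.prefix_append V _
        exact List.prefix_of_prefix_length_le p1 (List.prefix_append U _) hgt.le
      obtain ⟨U', rfl⟩ := hpre
      have hU' : U' ≠ [] := by
        rintro rfl; simp at hgt
      have hstep : V ++ U'.dropLast = U' ++ V.dropLast := by
        have := h.symm
        rw [List.dropLast_append_of_ne_nil hU', List.append_assoc] at this
        exact (List.append_cancel_left this)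
      have hlen : V.length + U'.length ≤ n := by
        have h1 : 0 < V.length := List.length_pos_iff.mpr hV
        simp only [List.length_append] at hn
        omega
      obtain ⟨W, i, j, hi, hj, hVe, hUe⟩ := ih V U' hlen hV hU' hstep
      exact ⟨W, i + j, i, by omega, hi, by rw [hVe, hUe, flatten_rep_add], hVe⟩

theorem power_of_common_word_of_dropLast_eq {A : Type*} (U V : List A)
    (hU : U ≠ []) (hV : V ≠ []) (h : (U ++ V).dropLast = (V ++ U).dropLast) :
    ∃ (W : List A) (i j : ℕ), 1 ≤ i ∧ 1 ≤ j ∧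
      U = (List.replicate i W).flatten ∧ V = (List.replicate j W).flatten ∧
      U ++ V = V ++ U ∧ U ++ V = (List.replicate (i + j) W).flatten := by
  rw [List.dropLast_append_of_ne_nil hV, List.dropLast_append_of_ne_nil hU] at h
  obtain ⟨W, i, j, hi, hj, hUe, hVe⟩ :=
    aux_pow (U.length + V.length) U V le_rfl hU hV h
  refine ⟨W, i, j, hi, hj, hUe, hVe, ?_, ?_⟩
  · rw [hUe, hVe, flatten_rep_add, flatten_rep_add, Nat.add_comm]
  · rw [hUe, hVe, flatten_rep_add]
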